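/- The determinant of the adjacency matrix of the Paley graph P(q) equals k·(k/2)^k, where k=(q-1)/2; in particular det(A) is coprime to q. -/

import Mathlib

open Finset Matrix

set_option linter.unusedSectionVars false

section facts
variable {F : Type*} [Field F] [Fintype F] [DecidableEq F]
    [DecidablePred (IsSquare : F → Prop)]
    {q : ℕ} (hq4 : q % 4 = 1) (hq5 : 5 ≤ q) (hcard : Fintype.card F = q)

include hq4 hcard in
lemma paley_hF : ringChar F ≠ 2 := by
  intro h
  have := FiniteField.even_card_of_char_two h
  rw [hcard] at this; omega

include hq4 hcard in
lemma paley_sum_left (x : F) : ∑ y : F, (quadraticChar F (x - y) : ℤ) = 0 := by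
  have e := Fintype.sum_equiv (Equiv.subLeft x) (fun y => (quadraticChar F (x - y) : ℤ))
    (fun t => (quadraticChar F t : ℤ)) (fun y => rfl)
  rw [e]
  exact quadraticChar_sum_zero (paley_hF hq4 hcard)

include hq4 hcard in
lemma paley_sum_right (z : F) : ∑ y : F, (quadraticChar F (y - z) : ℤ) = 0 := by
  have e := Fintype.sum_equiv (Equiv.subRight z) (fun y => (quadraticChar F (y - z) : ℤ))
    (fun t => (quadraticChar F t : ℤ)) (fun y => rfl)
  rw [e]
  exact quadraticChar_sum_zero (paley_hF hq4 hcard)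

include hq4 hcard in
lemma paley_chi_neg_one : quadraticChar F (-1) = 1 := by
  have h1 : IsSquare (-1 : F) := by
    rw [FiniteField.isSquare_neg_one_iff, hcard]; omega
  exact (quadraticChar_one_iff_isSquare (neg_ne_zero.mpr one_ne_zero)).mpr h1

/-- Shift sum for the quadratic character. -/
lemma paley_char_shift (hF : ringChar F ≠ 2) {c : F} (hc : c ≠ 0) :
    ∑ t : F, quadraticChar F t * quadraticChar F (t + c) = -1 := by
  classical
  have h0 : ∑ t : F, quadraticChar F t * quadraticChar F (t + c)
      = ∑ t ∈ univ.erase (0 : F), quadraticChar F t * quadraticChar F (t + c) := by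
    rw [Finset.sum_erase]
    simp [quadraticChar_zero]
  have h1 : ∀ t ∈ univ.erase (0 : F),
      quadraticChar F t * quadraticChar F (t + c) = quadraticChar F (1 + c / t) := by
    intro t ht
    have ht0 : t ≠ 0 := by simpa using (Finset.mem_erase.mp ht).1
    have : t + c = t * (1 + c / t) := by field_simp
    rw [this, _root_.map_mul, ← mul_assoc, ← pow_two, quadraticChar_sq_one ht0, one_mul]
  rw [h0, Finset.sum_congr rfl h1]
  have h2 : ∑ t ∈ univ.erase (0 : F), quadraticChar F (1 + c / t)
      = ∑ u ∈ univ.erase (1 : F), quadraticChar F u := by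
    apply Finset.sum_nbij' (fun t => 1 + c / t) (fun u => c / (u - 1))
    · intro t ht
      have ht0 : t ≠ 0 := by simpa using (Finset.mem_erase.mp ht).1
      simp only [Finset.mem_erase, Finset.mem_univ, and_true]
      intro h
      apply hc
      field_simp at h
      linear_combination h
    · intro u hu
      have hu1 : u - 1 ≠ 0 := sub_ne_zero.mpr (by simpa using (Finset.mem_erase.mp hu).1)
      simp only [Finset.mem_erase, Finset.mem_univ, and_true]
      exact div_ne_zero hc hu1
    · intro t ht
      have ht0 : t ≠ 0 := by simpa using (Finset.mem_erase.mp ht).1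
      field_simp
      simp [hc]
    · intro u hu
      have hu1 : u - 1 ≠ 0 := sub_ne_zero.mpr (by simpa using (Finset.mem_erase.mp hu).1)
      field_simp
      ring
    · intro t ht; rfl
  rw [h2]
  have h3 : ∑ u ∈ univ.erase (1 : F), quadraticChar F u
      = (∑ u : F, quadraticChar F u) - quadraticChar F 1 := by
    rw [← Finset.sum_erase_add univ _ (Finset.mem_univ 1)]; ring
  rw [h3, quadraticChar_sum_zero hF, _root_.map_one]
  ring

include hq4 hcard in
lemma paley_sum_two {x z : F} (hxz : x ≠ z) :
    ∑ y : F, (quadraticChar F (x - y) : ℤ) * quadraticChar F (y - z) = -1 := by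
  have hF := paley_hF hq4 hcard
  have e1 : ∀ y : F, (quadraticChar F (x - y) : ℤ) * quadraticChar F (y - z)
      = quadraticChar F (x - y) * quadraticChar F ((x - y) + (z - x)) := by
    intro y
    have : y - z = (-1) * ((x - y) + (z - x)) := by ring
    rw [this, _root_.map_mul, paley_chi_neg_one hq4 hcard, one_mul]
  rw [Fintype.sum_congr _ _ e1]
  have e := Fintype.sum_equiv (Equiv.subLeft x)
    (fun y => (quadraticChar F (x - y) : ℤ) * quadraticChar F ((x - y) + (z - x)))
    (fun t => (quadraticChar F t : ℤ) * quadraticChar F (t + (z - x))) (fun y => rfl)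
  rw [e]
  exact paley_char_shift hF (sub_ne_zero.mpr (Ne.symm hxz))

include hq4 hcard in
lemma paley_sum_two_eq (x : F) :
    ∑ y : F, (quadraticChar F (x - y) : ℤ) * quadraticChar F (x - y) = q - 1 := by
  have h : ∀ y : F, (quadraticChar F (x - y) : ℤ) * quadraticChar F (x - y)
      = if y = x then 0 else 1 := by
    intro y
    by_cases hy : y = x
    · simp [hy, quadraticChar_zero]
    · have : x - y ≠ 0 := sub_ne_zero.mpr (Ne.symm hy)
      rw [← pow_two, quadraticChar_sq_one this]
      simp [hy]
  rw [Fintype.sum_congr _ _ h]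
  rw [Finset.sum_ite]
  simp [Finset.filter_ne', Finset.card_erase_of_mem, hcard]
  omega

end facts

open Finset Matrix
set_option linter.unusedSectionVars false
set_option maxHeartbeats 800000

section mat
variable {F : Type*} [Field F] [Fintype F] [DecidableEq F]
    [DecidablePred (IsSquare : F → Prop)]
    {q : ℕ} (hq4 : q % 4 = 1) (hq5 : 5 ≤ q) (hcard : Fintype.card F = q)
    {A : Matrix F F ℤ}
    (hA : ∀ x y : F, A x y = if x ≠ y ∧ IsSquare (x - y) then 1 else 0)

-- pretend we have the char-sum lemmas:
variable (hsl : ∀ x : F, ∑ y : F, (quadraticChar F (x - y) : ℤ) = 0)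
    (hsr : ∀ z : F, ∑ y : F, (quadraticChar F (y - z) : ℤ) = 0)
    (hs2 : ∀ {x z : F}, x ≠ z → ∑ y : F, (quadraticChar F (x - y) : ℤ) * quadraticChar F (y - z) = -1)
    (hs2e : ∀ x : F, ∑ y : F, (quadraticChar F (x - y) : ℤ) * quadraticChar F (x - y) = q - 1)

include hq4 hcard hA in
lemma paley_e2 (u v : F) :
    2 * A u v = quadraticChar F (u - v) + (1 - if u = v then 1 else 0) := by
  by_cases huv : u = v
  · subst huv; simp [hA, quadraticChar_zero]
  · have hne : u - v ≠ 0 := sub_ne_zero.mpr huv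
    rw [hA]
    by_cases hs : IsSquare (u - v)
    · rw [(quadraticChar_one_iff_isSquare hne).mpr hs]; simp [huv, hs]
    · rw [quadraticChar_neg_one_iff_not_isSquare.mpr hs]; simp [huv, hs]

variable (hchisym : ∀ u v : F, (quadraticChar F (u - v) : ℤ) = quadraticChar F (v - u))

include hq4 hq5 hcard hA hsl hsr hs2 hs2e hchisym in
lemma paley_AA_entry (x z : F) :
    4 * ((A * A) x z + A x z) = (q - 1) * ((if x = z then 1 else 0) + 1) := by
  have e4 : (4:ℤ) * ((A * A) x z) = ∑ y : F, (2 * A x y) * (2 * A y z) := by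
    rw [Matrix.mul_apply, Finset.mul_sum]
    congr 1 with y
    ring
  have expand : ∀ y : F, (2 * A x y) * (2 * A y z)
      = (quadraticChar F (x - y) : ℤ) * quadraticChar F (y - z)
        + quadraticChar F (x - y) + quadraticChar F (y - z)
        - (if y = z then (quadraticChar F (x - y) : ℤ) else 0)
        - (if y = x then (quadraticChar F (y - z) : ℤ) else 0)
        + (if y = x then (if y = z then (1:ℤ) else 0) else 0)
        - (if y = x then 1 else 0) - (if y = z then 1 else 0) + 1 := by
    intro y
    rw [paley_e2 hq4 hcard hA x y, paley_e2 hq4 hcard hA y z]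
    by_cases h1 : x = y
    · subst h1
      by_cases h2 : x = z <;> simp [h2] <;> ring
    · have h1' : ¬ y = x := fun h => h1 h.symm
      by_cases h2 : y = z
      · subst h2
        simp [h1, h1'] <;> ring
      · simp [h1, h1', h2] <;> ring
  rw [mul_add, e4, Fintype.sum_congr _ _ expand]
  simp only [Finset.sum_add_distrib, Finset.sum_sub_distrib]
  have S1 : ∑ y : F, (quadraticChar F (x - y) : ℤ) * quadraticChar F (y - z)
      = if x = z then (q:ℤ) - 1 else -1 := by
    by_cases hxz : x = z
    · subst hxz
      rw [if_pos rfl, ← hs2e x]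
      exact Finset.sum_congr rfl fun y _ => by rw [hchisym y x]
    · rw [if_neg hxz]; exact hs2 hxz
  have S4 : ∑ y : F, (if y = z then (quadraticChar F (x - y) : ℤ) else 0)
      = quadraticChar F (x - z) := by
    rw [Finset.sum_ite_eq' univ z (fun y => (quadraticChar F (x - y) : ℤ))]
    simp
  have S5 : ∑ y : F, (if y = x then (quadraticChar F (y - z) : ℤ) else 0)
      = quadraticChar F (x - z) := by
    rw [Finset.sum_ite_eq' univ x (fun y => (quadraticChar F (y - z) : ℤ))]
    simp
  have S6 : ∑ y : F, (if y = x then (if y = z then (1:ℤ) else 0) else 0)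
      = if x = z then 1 else 0 := by
    rw [Finset.sum_ite_eq' univ x (fun y => (if y = z then (1:ℤ) else 0))]
    simp
  have S7 : ∑ y : F, (if y = x then (1:ℤ) else 0) = 1 := by
    rw [Finset.sum_ite_eq' univ x (fun _ => (1:ℤ))]; simp
  have S8 : ∑ y : F, (if y = z then (1:ℤ) else 0) = 1 := by
    rw [Finset.sum_ite_eq' univ z (fun _ => (1:ℤ))]; simp
  have S9 : ∑ _y : F, (1:ℤ) = q := by simp [Finset.card_univ, hcard]
  rw [S1, S4, S5, S6, S7, S8, S9, hsl x, hsr z]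
  have h4A : 4 * A x z = 2 * (quadraticChar F (x - z) + (1 - if x = z then 1 else 0)) := by
    rw [← paley_e2 hq4 hcard hA x z]; ring
  rw [h4A]
  by_cases hxz : x = z <;> simp [hxz] <;> ring

include hq4 hcard hA hsl in
lemma paley_rowsum (x : F) : 2 * ∑ y : F, A x y = q - 1 := by
  have : ∀ y : F, 2 * A x y = quadraticChar F (x - y) + (1 - if x = y then 1 else 0) :=
    fun y => paley_e2 hq4 hcard hA x y
  rw [Finset.mul_sum, Fintype.sum_congr _ _ this]
  simp only [Finset.sum_add_distrib, Finset.sum_sub_distrib, hsl x]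
  have S7 : ∑ y : F, (if x = y then (1:ℤ) else 0) = 1 := by
    rw [Finset.sum_ite_eq univ x (fun _ => (1:ℤ))]; simp
  rw [S7]
  simp [Finset.card_univ, hcard]

include hq4 hcard hA in
lemma paley_symm (x y : F) : A x y = A y x := by
  have hm1 : IsSquare (-1 : F) := by
    rw [FiniteField.isSquare_neg_one_iff, hcard]; omega
  have hiff : ∀ u v : F, IsSquare (u - v) → IsSquare (v - u) := by
    intro u v h
    have : v - u = (-1) * (u - v) := by ring
    rw [this]
    exact hm1.mul h
  rw [hA, hA]
  by_cases hxy : x = y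
  · simp [hxy]
  · by_cases hs : IsSquare (x - y)
    · simp [hxy, Ne.symm hxy, hs, hiff x y hs]
    · have hs' : ¬ IsSquare (y - x) := fun h => hs (hiff y x h)
      simp [hxy, Ne.symm hxy, hs, hs']

variable (kz μz : ℤ) (hk : 2 * kz = (q:ℤ) - 1) (hμ : 4 * μz = (q:ℤ) - 1)

include hq4 hq5 hcard hA hsl hk in
lemma paley_AJ : A * (Matrix.of fun _ _ => (1:ℤ)) = kz • (Matrix.of fun _ _ => (1:ℤ)) := by
  ext x z
  simp only [Matrix.mul_apply, Matrix.of_apply, Matrix.smul_apply, mul_one, smul_eq_mul]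
  have := paley_rowsum hq4 hcard hA hsl x
  linarith

include hq4 hq5 hcard hA hsl hsr hs2 hs2e hchisym hμ in
lemma paley_AAm : A * A + A = μz • (1 : Matrix F F ℤ) + μz • (Matrix.of fun _ _ => (1:ℤ)) := by
  ext x z
  have h := paley_AA_entry hq4 hq5 hcard hA hsl hsr @hs2 hs2e hchisym x z
  simp only [Matrix.add_apply, Matrix.smul_apply, Matrix.one_apply, Matrix.of_apply,
    smul_eq_mul, mul_one]
  by_cases hxz : x = z <;> simp only [hxz, if_pos, if_neg] <;> simp [hxz] at h ⊢ <;> linarith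

include hq4 hq5 hcard hA hsl hsr hs2 hs2e hchisym hk hμ in
lemma paley_key :
    (A - kz • (1 : Matrix F F ℤ)) * (A * A + A - μz • (1 : Matrix F F ℤ)) = 0 := by
  have h1 : A * A + A - μz • (1 : Matrix F F ℤ) = μz • (Matrix.of fun _ _ => (1:ℤ)) := by
    rw [paley_AAm hq4 hq5 hcard hA hsl hsr @hs2 hs2e hchisym μz hμ]
    abel
  rw [h1, mul_smul_comm, sub_mul, smul_mul_assoc, one_mul,
    paley_AJ hq4 hq5 hcard hA hsl kz hk, sub_self, smul_zero]

include hA in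
lemma paley_trA : Matrix.trace A = 0 := by
  have : ∀ x : F, A x x = 0 := by intro x; simp [hA]
  simp [Matrix.trace, Matrix.diag, this]

include hq4 hq5 hcard hA hsl hsr hs2 hs2e hchisym hμ in
lemma paley_trAA : Matrix.trace (A * A) = 2 * μz * q := by
  have hdiag : ∀ x : F, (A * A) x x = 2 * μz := by
    intro x
    have h := paley_AA_entry hq4 hq5 hcard hA hsl hsr @hs2 hs2e hchisym x x
    have h0 : A x x = 0 := by simp [hA]
    simp [h0] at h
    linarith
  simp [Matrix.trace, Matrix.diag, hdiag, Finset.card_univ, hcard]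
  ring
end mat

open Finset Matrix
set_option linter.unusedSectionVars false
set_option maxHeartbeats 1000000

section real
variable {F : Type*} [Fintype F] [DecidableEq F]

lemma paley_real_det (q kn : ℕ) (hq5 : 5 ≤ q) (hcardF : Fintype.card F = q)
    (hkn : 2 * kn = q - 1) (hkeven : Even kn)
    (B : Matrix F F ℝ) (hB : B.IsHermitian)
    (kr μr : ℝ) (hkr : kr = (kn : ℝ)) (hμr : μr = ((q:ℝ) - 1)/4)
    (key : (B - kr • 1) * (B * B + B - μr • 1) = 0)
    (htr : Matrix.trace B = 0) (htr2 : Matrix.trace (B * B) = 2 * μr * q) :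
    B.det = (kn : ℝ) * μr ^ kn := by
  classical
  set V : Matrix F F ℝ := (hB.eigenvectorUnitary : Matrix F F ℝ) with hV
  have hV1 : star V * V = 1 := Matrix.mem_unitaryGroup_iff'.mp hB.eigenvectorUnitary.2
  have hV2 : V * star V = 1 := Matrix.mem_unitaryGroup_iff.mp hB.eigenvectorUnitary.2
  set d : F → ℝ := RCLike.ofReal ∘ hB.eigenvalues with hd
  set D : Matrix F F ℝ := Matrix.diagonal d with hD
  have hBspec : B = V * D * star V := hB.spectral_theorem
  have hV1' : ∀ w : Matrix F F ℝ, star V * (V * w) = w := by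
    intro w; rw [← mul_assoc, hV1, one_mul]
  have hV2' : ∀ w : Matrix F F ℝ, V * (star V * w) = w := by
    intro w; rw [← mul_assoc, hV2, one_mul]
  have hconj : ∀ X Y : Matrix F F ℝ,
      (V * X * star V) * (V * Y * star V) = V * (X * Y) * star V := by
    intro X Y
    simp only [mul_assoc, hV1', hV2']
  have hsc : ∀ c : ℝ, V * (c • 1) * star V = c • 1 := by
    intro c
    rw [mul_smul_comm, mul_one, smul_mul_assoc, hV2]
  have hsub : ∀ X Y : Matrix F F ℝ,
      V * (X - Y) * star V = V * X * star V - V * Y * star V := by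
    intro X Y; rw [mul_sub, sub_mul]
  have hadd : ∀ X Y : Matrix F F ℝ,
      V * (X + Y) * star V = V * X * star V + V * Y * star V := by
    intro X Y; rw [mul_add, add_mul]
  have e1 : V * (D - kr • 1) * star V = B - kr • 1 := by
    rw [hsub, hsc, ← hBspec]
  have e2 : V * (D * D + D - μr • 1) * star V = B * B + B - μr • 1 := by
    rw [hsub, hadd, hsc, ← hconj, ← hBspec]
  have hP0 : V * ((D - kr • 1) * (D * D + D - μr • 1)) * star V = 0 := by
    rw [← hconj, e1, e2]
    exact key
  have hP : (D - kr • 1) * (D * D + D - μr • 1) = 0 := by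
    have := congrArg (fun X => star V * X * V) hP0
    simpa only [mul_assoc, hV1', hV1, mul_one, mul_zero, zero_mul] using this
  have heig : ∀ i : F, (d i - kr) * (d i * d i + d i - μr) = 0 := by
    intro i
    have h1 : (D - kr • 1) = Matrix.diagonal (fun j => d j - kr) := by
      ext a b
      by_cases hab : a = b <;>
        simp [hab, hD, Matrix.sub_apply, Matrix.smul_apply, Matrix.one_apply,
          Matrix.diagonal_apply]
    have h2 : (D * D + D - μr • 1)
        = Matrix.diagonal (fun j => d j * d j + d j - μr) := by
      rw [hD, Matrix.diagonal_mul_diagonal]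
      ext a b
      by_cases hab : a = b <;>
        simp [hab, Matrix.sub_apply, Matrix.add_apply, Matrix.smul_apply, Matrix.one_apply,
          Matrix.diagonal_apply]
    have h3 := hP
    rw [h1, h2, Matrix.diagonal_mul_diagonal] at h3
    have := congrFun (congrFun h3 i) i
    simpa [Matrix.diagonal_apply_eq] using this
  -- traces in terms of eigenvalues
  have htrD : ∑ i, d i = 0 := by
    have h : Matrix.trace B = Matrix.trace D := by
      rw [hBspec, Matrix.trace_mul_cycle, hV1, one_mul]
    rw [htr, hD, Matrix.trace_diagonal] at h
    exact h.symm
  have htrD2 : ∑ i, d i * d i = 2 * μr * q := by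
    have hBB : B * B = V * (D * D) * star V := by
      rw [hBspec, hconj]
    have h : Matrix.trace (B * B) = ∑ i, d i * d i := by
      rw [hBB, Matrix.trace_mul_cycle, hV1, one_mul, hD, Matrix.diagonal_mul_diagonal,
        Matrix.trace_diagonal]
    rw [htr2] at h
    exact h.symm
  -- square root and roots of the quadratic
  set sq : ℝ := Real.sqrt q with hsqdef
  have hq5r : (5:ℝ) ≤ (q:ℝ) := by exact_mod_cast hq5
  have hsq : sq * sq = (q:ℝ) := Real.mul_self_sqrt (by positivity)
  have hsqnn : 0 ≤ sq := Real.sqrt_nonneg _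
  have hsq1 : 1 < sq := by nlinarith
  set r : ℝ := (-1 + sq)/2 with hrdef
  set s : ℝ := (-1 - sq)/2 with hsdef
  have hμr4 : 4 * μr = (q:ℝ) - 1 := by rw [hμr]; ring
  have hkr2 : 2 * kr = (q:ℝ) - 1 := by
    rw [hkr]
    have h1 : ((2 * kn : ℕ) : ℝ) = ((q - 1 : ℕ) : ℝ) := congrArg (fun n : ℕ => (n:ℝ)) hkn
    push_cast [Nat.cast_sub (by omega : 1 ≤ q)] at h1
    linarith
  have hknr : 2 * (kn:ℝ) = (q:ℝ) - 1 := by rw [← hkr]; exact hkr2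
  have hquad : ∀ t : ℝ, t * t + t - μr = (t - r) * (t - s) := by
    intro t
    rw [hrdef, hsdef, hμr]
    ring_nf
    linear_combination (1/4 : ℝ) * hsq
  have heig' : ∀ i, d i = kr ∨ d i = r ∨ d i = s := by
    intro i
    rcases mul_eq_zero.mp (heig i) with h | h
    · exact Or.inl (by linarith [sub_eq_zero.mp h])
    · rw [hquad] at h
      rcases mul_eq_zero.mp h with h' | h'
      · exact Or.inr (Or.inl (by linarith [sub_eq_zero.mp h']))
      · exact Or.inr (Or.inr (by linarith [sub_eq_zero.mp h']))
  have hkr_ne_r : kr ≠ r := by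
    have : r < kr := by rw [hrdef]; nlinarith
    exact this.ne'
  have hkr_ne_s : kr ≠ s := by
    have : s < kr := by rw [hsdef]; nlinarith
    exact this.ne'
  have hr_ne_s : r ≠ s := by
    have : s < r := by rw [hrdef, hsdef]; nlinarith
    exact this.ne'
  -- partition
  set S : Finset F := Finset.univ.filter (fun i => d i = kr) with hS
  set T : Finset F := Finset.univ.filter (fun i => d i = r) with hT
  set W : Finset F := Finset.univ.filter (fun i => d i = s) with hW
  have hdST : Disjoint S T := by
    rw [Finset.disjoint_left]
    intro i hi hj
    rw [hS, Finset.mem_filter] at hi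
    rw [hT, Finset.mem_filter] at hj
    exact hkr_ne_r (hi.2 ▸ hj.2)
  have hdSTW : Disjoint (S ∪ T) W := by
    rw [Finset.disjoint_left]
    intro i hi hj
    rw [hW, Finset.mem_filter] at hj
    rcases Finset.mem_union.mp hi with h | h
    · rw [hS, Finset.mem_filter] at h
      exact hkr_ne_s (h.2 ▸ hj.2)
    · rw [hT, Finset.mem_filter] at h
      exact hr_ne_s (h.2 ▸ hj.2)
  have hunion : S ∪ T ∪ W = Finset.univ := by
    apply Finset.eq_univ_of_forall
    intro i
    simp only [Finset.mem_union, hS, hT, hW, Finset.mem_filter, Finset.mem_univ, true_and]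
    rcases heig' i with h | h | h
    · exact Or.inl (Or.inl h)
    · exact Or.inl (Or.inr h)
    · exact Or.inr h
  set a := S.card with ha'
  set b := T.card with hb'
  set c := W.card with hc'
  have hcards : a + b + c = q := by
    have h1 : (S ∪ T ∪ W).card = q := by rw [hunion, Finset.card_univ, hcardF]
    rw [Finset.card_union_of_disjoint hdSTW, Finset.card_union_of_disjoint hdST] at h1
    exact h1
  have hsumS : ∀ (f : ℝ → ℝ), ∑ i ∈ S, f (d i) = a * f kr := by
    intro f
    have he : ∑ i ∈ S, f (d i) = ∑ _i ∈ S, f kr :=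
      Finset.sum_congr rfl (fun i hi => by
        rw [hS, Finset.mem_filter] at hi
        rw [hi.2])
    rw [he, Finset.sum_const, nsmul_eq_mul]
  have hsumT : ∀ (f : ℝ → ℝ), ∑ i ∈ T, f (d i) = b * f r := by
    intro f
    have he : ∑ i ∈ T, f (d i) = ∑ _i ∈ T, f r :=
      Finset.sum_congr rfl (fun i hi => by
        rw [hT, Finset.mem_filter] at hi
        rw [hi.2])
    rw [he, Finset.sum_const, nsmul_eq_mul]
  have hsumW : ∀ (f : ℝ → ℝ), ∑ i ∈ W, f (d i) = c * f s := by
    intro f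
    have he : ∑ i ∈ W, f (d i) = ∑ _i ∈ W, f s :=
      Finset.sum_congr rfl (fun i hi => by
        rw [hW, Finset.mem_filter] at hi
        rw [hi.2])
    rw [he, Finset.sum_const, nsmul_eq_mul]
  have hsplit : ∀ (f : ℝ → ℝ), ∑ i, f (d i) = a * f kr + b * f r + c * f s := by
    intro f
    rw [← hunion, Finset.sum_union hdSTW, Finset.sum_union hdST, hsumS, hsumT, hsumW]
  have hE0 : (a:ℝ) + b + c = q := by exact_mod_cast congrArg (Nat.cast : ℕ → ℝ) hcards
  have hE1 : (a:ℝ) * kr + b * r + c * s = 0 := by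
    have := hsplit id
    simp only [id] at this
    rw [← this]
    exact htrD
  have hE2 : (a:ℝ) * (kr * kr) + b * (r * r) + c * (s * s) = 2 * μr * q := by
    have := hsplit (fun t => t * t)
    rw [← this]
    exact htrD2
  -- solve for a, b, c
  have hrr : r * r + r - μr = 0 := by rw [hquad r]; ring
  have hss : s * s + s - μr = 0 := by rw [hquad s]; ring
  have hA1 : (a:ℝ) * (kr * kr + kr - μr) = μr * q := by
    linear_combination (-μr) * hE0 + hE1 + hE2 - (b:ℝ) * hrr - (c:ℝ) * hss
  have hkk : kr * kr + kr - μr = μr * q := by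
    linear_combination ((2*kr + (q:ℝ) + 1)/4) * hkr2 + (-(1+(q:ℝ))/4) * hμr4
  have hμq : μr * q ≠ 0 := by
    have : (0:ℝ) < μr * q := by rw [hμr]; nlinarith
    exact this.ne'
  have haR : (a:ℝ) = 1 := by
    have h := hA1
    rw [hkk] at h
    exact mul_right_cancel₀ hμq (by linarith [h] : (a:ℝ) * (μr * q) = 1 * (μr * q))
  have hbc : (b:ℝ) - c = 0 := by
    have hsq0 : sq ≠ 0 := by linarith
    have h : ((b:ℝ) - c) * sq = 0 := by
      rw [hrdef, hsdef] at hE1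
      linear_combination 2 * hE1 + hE0 - (1 + 2*kr) * haR - hkr2
    rcases mul_eq_zero.mp h with h' | h'
    · exact h'
    · exact absurd h' hsq0
  have hbR : (b:ℝ) = kn := by
    have : (b:ℝ) + c = (q:ℝ) - 1 := by linarith [hE0, haR]
    linarith [hknr, hbc, this]
  have hcR : (c:ℝ) = kn := by
    have : (b:ℝ) + c = (q:ℝ) - 1 := by linarith [hE0, haR]
    linarith [hknr, hbc, this]
  have haN : a = 1 := by exact_mod_cast haR
  have hbN : b = kn := by exact_mod_cast hbR
  have hcN : c = kn := by exact_mod_cast hcR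
  -- determinant
  have hdet : B.det = ∏ i, d i := hB.det_eq_prod_eigenvalues
  have hprod : ∏ i, d i = kr ^ a * r ^ b * s ^ c := by
    rw [← hunion, Finset.prod_union hdSTW, Finset.prod_union hdST]
    have pS : ∏ i ∈ S, d i = kr ^ a := by
      have he : ∏ i ∈ S, d i = ∏ _i ∈ S, kr :=
        Finset.prod_congr rfl (fun i hi => by
          rw [hS, Finset.mem_filter] at hi
          exact hi.2)
      rw [he, Finset.prod_const]
    have pT : ∏ i ∈ T, d i = r ^ b := by
      have he : ∏ i ∈ T, d i = ∏ _i ∈ T, r :=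
        Finset.prod_congr rfl (fun i hi => by
          rw [hT, Finset.mem_filter] at hi
          exact hi.2)
      rw [he, Finset.prod_const]
    have pW : ∏ i ∈ W, d i = s ^ c := by
      have he : ∏ i ∈ W, d i = ∏ _i ∈ W, s :=
        Finset.prod_congr rfl (fun i hi => by
          rw [hW, Finset.mem_filter] at hi
          exact hi.2)
      rw [he, Finset.prod_const]
    rw [pS, pT, pW]
  have hrs : r * s = -μr := by
    have := hquad 0
    simp at this
    linarith
  rw [hdet, hprod, haN, hbN, hcN, pow_one, mul_assoc, ← mul_pow, hrs, hkeven.neg_pow, hkr]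
end real


/-- The determinant of the adjacency matrix of the Paley graph `P(q)` equals
`k·(k/2)^k` where `k = (q-1)/2`; in particular it is coprime to `q`. -/
theorem paley_adjacency_det
    (q : ℕ) (hq : IsPrimePow q) (hq4 : q % 4 = 1)
    (F : Type*) [Field F] [Fintype F] [DecidableEq F]
    [DecidablePred (IsSquare : F → Prop)]
    (hcard : Fintype.card F = q)
    (A : Matrix F F ℤ)
    (hA : ∀ x y : F, A x y = if x ≠ y ∧ IsSquare (x - y) then 1 else 0) :
    A.det = (((q - 1) / 2 : ℕ) : ℤ) * ((((q - 1) / 2) / 2 : ℕ) : ℤ) ^ ((q - 1) / 2) ∧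
      IsCoprime A.det (q : ℤ) := by
  classical
  have hq1 : 1 < q := hq.one_lt
  have hq5 : 5 ≤ q := by omega
  set kn : ℕ := (q - 1) / 2 with hkndef
  set μn : ℕ := kn / 2 with hμndef
  have hkn : 2 * kn = q - 1 := by omega
  have hμn : 4 * μn = q - 1 := by omega
  have hknμ : kn = 2 * μn := by omega
  have hkeven : Even kn := by rw [Nat.even_iff]; omega
  -- character sum facts
  have hsl := paley_sum_left (F := F) hq4 hcard
  have hsr := paley_sum_right (F := F) hq4 hcard
  have hs2 : ∀ {x z : F}, x ≠ z →
      ∑ y : F, (quadraticChar F (x - y) : ℤ) * quadraticChar F (y - z) = -1 :=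
    fun hxz => paley_sum_two hq4 hcard hxz
  have hs2e := paley_sum_two_eq (F := F) hq4 hcard
  have hchisym : ∀ u v : F, (quadraticChar F (u - v) : ℤ) = quadraticChar F (v - u) := by
    intro u v
    have h : v - u = (-1) * (u - v) := by ring
    rw [h, _root_.map_mul, paley_chi_neg_one hq4 hcard, one_mul]
  set kz : ℤ := (kn : ℤ) with hkzdef
  set μz : ℤ := (μn : ℤ) with hμzdef
  have hkz : 2 * kz = (q : ℤ) - 1 := by
    have := hkn; rw [hkzdef]; omega
  have hμz : 4 * μz = (q : ℤ) - 1 := by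
    have := hμn; rw [hμzdef]; omega
  have key := paley_key hq4 hq5 hcard hA hsl hsr @hs2 hs2e hchisym kz μz hkz hμz
  have htrA := paley_trA hA
  have htrAA := paley_trAA hq4 hq5 hcard hA hsl hsr @hs2 hs2e hchisym μz hμz
  have hsymm := paley_symm hq4 hcard hA
  -- move to ℝ
  set B : Matrix F F ℝ := A.map (Int.cast : ℤ → ℝ) with hBdef
  have hB : B.IsHermitian := by
    rw [Matrix.IsHermitian]
    ext i j
    simp only [Matrix.conjTranspose_apply, hBdef, Matrix.map_apply, star_trivial]
    rw [hsymm j i]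
  have hmapmul : ∀ X Y : Matrix F F ℤ, (X * Y).map (Int.cast : ℤ → ℝ) = X.map (Int.cast : ℤ → ℝ) * Y.map (Int.cast : ℤ → ℝ) := by
    intro X Y
    exact Matrix.map_mul (f := Int.castRingHom ℝ)
  have hmapsub : ∀ X Y : Matrix F F ℤ, (X - Y).map (Int.cast : ℤ → ℝ) = X.map (Int.cast : ℤ → ℝ) - Y.map (Int.cast : ℤ → ℝ) := by
    intro X Y; ext i j
    simp [Matrix.map_apply, Matrix.sub_apply]
  have hmapadd : ∀ X Y : Matrix F F ℤ, (X + Y).map (Int.cast : ℤ → ℝ) = X.map (Int.cast : ℤ → ℝ) + Y.map (Int.cast : ℤ → ℝ) := by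
    intro X Y; ext i j
    simp [Matrix.map_apply, Matrix.add_apply]
  have hmapsmul : ∀ z : ℤ, ((z • (1 : Matrix F F ℤ)).map (Int.cast : ℤ → ℝ)) = (z : ℝ) • 1 := by
    intro z; ext i j
    by_cases hij : i = j <;>
      simp [hij, Matrix.map_apply, Matrix.smul_apply, Matrix.one_apply,
        ← Matrix.diagonal_intCast (n := F), Matrix.diagonal_apply]
  have hmap0 : ((0 : Matrix F F ℤ).map (Int.cast : ℤ → ℝ)) = 0 := by
    ext i j; simp [Matrix.map_apply]
  set kr : ℝ := (kn : ℝ) with hkrdef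
  set μr : ℝ := (μn : ℝ) with hμrdef
  have hμrval : μr = ((q:ℝ) - 1)/4 := by
    have h4 : ((4 * μn : ℕ) : ℝ) = ((q - 1 : ℕ) : ℝ) := congrArg (fun n : ℕ => (n:ℝ)) hμn
    push_cast [Nat.cast_sub (by omega : 1 ≤ q)] at h4
    rw [hμrdef]; linarith
  have hkzr : (kz : ℝ) = kr := by rw [hkzdef, hkrdef]; push_cast; rfl
  have hμzr : (μz : ℝ) = μr := by rw [hμzdef, hμrdef]; push_cast; rfl
  have keyB : (B - kr • 1) * (B * B + B - μr • 1) = 0 := by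
    have h := congrArg (fun X : Matrix F F ℤ => X.map (Int.cast : ℤ → ℝ)) key
    rw [hmapmul, hmapsub, hmapsub, hmapadd, hmapmul, hmapsmul, hmapsmul, hmap0,
      hkzr, hμzr] at h
    exact h
  have htrB : Matrix.trace B = 0 := by
    simp only [Matrix.trace, Matrix.diag, hBdef, Matrix.map_apply]
    rw [← Int.cast_sum]
    simp only [Matrix.trace, Matrix.diag] at htrA
    rw [htrA, Int.cast_zero]
  have htrBB : Matrix.trace (B * B) = 2 * μr * q := by
    rw [← hmapmul]
    simp only [Matrix.trace, Matrix.diag, Matrix.map_apply]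
    rw [← Int.cast_sum]
    simp only [Matrix.trace, Matrix.diag] at htrAA
    rw [htrAA]
    push_cast
    rw [hμzr]
  have hdetB := paley_real_det q kn hq5 hcard hkn hkeven B hB kr μr hkrdef hμrval
    keyB htrB htrBB
  have hdetmap : ((A.det : ℤ) : ℝ) = B.det := by
    rw [hBdef]
    exact RingHom.map_det (Int.castRingHom ℝ) A
  have hdetZ : A.det = (kn : ℤ) * (μn : ℤ) ^ kn := by
    have h : ((A.det : ℤ) : ℝ) = (((kn : ℤ) * (μn : ℤ) ^ kn : ℤ) : ℝ) := by
      rw [hdetmap, hdetB]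
      push_cast
      rw [hμrdef]
    exact_mod_cast h
  constructor
  · exact hdetZ
  · rw [hdetZ]
    have hnat : A.det = ((kn * μn ^ kn : ℕ) : ℤ) := by rw [hdetZ]; push_cast; ring
    have hco : Nat.Coprime (kn * μn ^ kn) q := by
      have hq1co : Nat.Coprime (q - 1) q :=
        (Nat.coprime_self_sub_left (by omega : 1 ≤ q)).mpr (Nat.coprime_one_left q)
      have hknco : Nat.Coprime kn q :=
        Nat.Coprime.coprime_dvd_left ⟨2, by omega⟩ hq1co
      have hμnco : Nat.Coprime μn q :=
        Nat.Coprime.coprime_dvd_left ⟨4, by omega⟩ hq1co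
      have hpow : Nat.Coprime (μn ^ kn) q := by
        have := Nat.Coprime.pow kn 1 hμnco
        rwa [pow_one] at this
      exact Nat.Coprime.mul hknco hpow
    have := (Nat.isCoprime_iff_coprime).mpr hco
    rw [← hdetZ]
    rw [hnat]
    exact_mod_cast this
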